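/- Let Ω ⊂ ℝⁿ be a bounded measurable set of finite positive Lebesgue measure, let α, β, γ, M, N, δ, ρ > 0, let f : ℝ² → ℝ be continuously differentiable with ∂f/∂x ≤ −α and 0 ≤ ∂f/∂y ≤ βN everywhere, and let m : ℝ → ℝ be continuously differentiable with 0 ≤ m′ ≤ γM/δ. Then for all bounded measurable square-integrable functions x, X, η : Ω → ℝ: ∫_Ω (x−X)(u)·( f(x(u), m(x(u))+η(u)) − f(X(u), m(X(u))) ) du ≤ ( βN(γM/δ + ρ²) − α ) ∫_Ω (x−X)(u)² du + (βN/ρ²) ∫_Ω η(u)² du. -/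

import Mathlib

open MeasureTheory Real

/-- Pointwise key inequality. -/
lemma stmt4_key (α β γ M N δ ρ : ℝ) (hα : 0 < α) (hβ : 0 < β) (hγ : 0 < γ)
    (hM : 0 < M) (hN : 0 < N) (hδ : 0 < δ) (hρ : 0 < ρ)
    (f : ℝ → ℝ → ℝ) (hf : ContDiff ℝ 1 (fun p : ℝ × ℝ => f p.1 p.2))
    (hfx : ∀ a b : ℝ, deriv (fun s => f s b) a ≤ -α)
    (hfy : ∀ a b : ℝ, 0 ≤ deriv (fun s => f a s) b ∧ deriv (fun s => f a s) b ≤ β * N)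
    (m : ℝ → ℝ) (hmC : ContDiff ℝ 1 m)
    (hm' : ∀ a : ℝ, 0 ≤ deriv m a ∧ deriv m a ≤ γ * M / δ)
    (a b e : ℝ) :
    (a - b) * (f a (m a + e) - f b (m b)) ≤
      (β * N * (γ * M / δ + ρ ^ 2) - α) * (a - b) ^ 2 + β * N / ρ ^ 2 * e ^ 2 := by
  have hfd : Differentiable ℝ (fun p : ℝ × ℝ => f p.1 p.2) := hf.differentiable one_ne_zero
  have hfxd : ∀ y : ℝ, Differentiable ℝ (fun s => f s y) := fun y =>
    hfd.comp (differentiable_id.prodMk (differentiable_const y))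
  have hfyd : ∀ a : ℝ, Differentiable ℝ (fun s => f a s) := fun a =>
    hfd.comp ((differentiable_const a).prodMk differentiable_id)
  set y := m a + e with hy
  -- first variable part
  have h1 : (a - b) * (f a y - f b y) ≤ -α * (a - b) ^ 2 := by
    set G : ℝ → ℝ := fun s => f s y + α * s with hG
    have hGd : ∀ t, HasDerivAt G (deriv (fun s => f s y) t + α) t := by
      intro t
      have h1 := ((hfxd y) t).hasDerivAt
      have h2 : HasDerivAt (fun s : ℝ => α * s) α t := by
        simpa using (hasDerivAt_id t).const_mul α
      exact h1.add h2
    have hanti : Antitone G := by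
      apply antitone_of_deriv_nonpos (fun t => (hGd t).differentiableAt)
      intro t
      rw [(hGd t).deriv]
      have := hfx t y
      linarith
    rcases le_total a b with hab | hab
    · have := hanti hab
      have hGa : G a = f a y + α * a := rfl
      have hGb : G b = f b y + α * b := rfl
      nlinarith [this]
    · have := hanti hab
      have hGa : G a = f a y + α * a := rfl
      have hGb : G b = f b y + α * b := rfl
      nlinarith [this]
  -- Lipschitz bounds
  have hβN : (0:ℝ) ≤ β * N := by positivity
  have hlipf : ∀ c p q : ℝ, |f c p - f c q| ≤ β * N * |p - q| := by
    intro c p q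
    have := Convex.norm_image_sub_le_of_norm_deriv_le (s := (Set.univ : Set ℝ))
      (C := β * N) (f := fun s => f c s) (fun t _ => ((hfyd c) t)) (fun t _ => by
        rw [Real.norm_eq_abs, abs_le]
        constructor
        · linarith [(hfy c t).1, hβN]
        · exact (hfy c t).2) convex_univ (Set.mem_univ q) (Set.mem_univ p)
    simpa [Real.norm_eq_abs] using this
  have hlipm : ∀ p q : ℝ, |m p - m q| ≤ γ * M / δ * |p - q| := by
    intro p q
    have := Convex.norm_image_sub_le_of_norm_deriv_le (s := (Set.univ : Set ℝ))
      (C := γ * M / δ) (f := m) (fun t _ => (hmC.differentiable one_ne_zero t)) (fun t _ => by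
        rw [Real.norm_eq_abs, abs_le]
        constructor
        · have h0 : (0:ℝ) ≤ γ * M / δ := by positivity
          linarith [(hm' t).1]
        · exact (hm' t).2) convex_univ (Set.mem_univ q) (Set.mem_univ p)
    simpa [Real.norm_eq_abs] using this
  -- second variable part
  have h2 : (a - b) * (f b y - f b (m b)) ≤
      β * N * (γ * M / δ) * (a - b) ^ 2 + β * N * ρ ^ 2 * (a - b) ^ 2 + β * N / ρ ^ 2 * e ^ 2 := by
    have hD : |f b y - f b (m b)| ≤ β * N * (γ * M / δ * |a - b| + |e|) := by
      have h0 : |f b y - f b (m b)| ≤ β * N * |y - m b| := hlipf b y (m b)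
      have h1' : |y - m b| ≤ |m a - m b| + |e| := by
        have : y - m b = (m a - m b) + e := by rw [hy]; ring
        rw [this]; exact abs_add_le _ _
      have h2' := hlipm a b
      calc |f b y - f b (m b)| ≤ β * N * |y - m b| := h0
        _ ≤ β * N * (|m a - m b| + |e|) := mul_le_mul_of_nonneg_left h1' hβN
        _ ≤ β * N * (γ * M / δ * |a - b| + |e|) := by
            apply mul_le_mul_of_nonneg_left _ hβN
            linarith [h2']
    have habs : (a - b) * (f b y - f b (m b)) ≤ |a - b| * |f b y - f b (m b)| := by
      rw [← abs_mul]; exact le_abs_self _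
    have hcross : |a - b| * |e| ≤ ρ ^ 2 * (a - b) ^ 2 + e ^ 2 / ρ ^ 2 := by
      have hab2 : |a - b| ^ 2 = (a - b) ^ 2 := sq_abs _
      have he2 : |e| ^ 2 = e ^ 2 := sq_abs _
      have hρ2 : (0:ℝ) < ρ ^ 2 := by positivity
      have habn : (0:ℝ) ≤ |a - b| := abs_nonneg _
      have hen : (0:ℝ) ≤ |e| := abs_nonneg _
      have h' : ρ ^ 2 * (|a - b| * |e|) ≤ ρ ^ 4 * (a - b) ^ 2 + e ^ 2 := by
        rcases abs_cases ((a - b) * e) with ⟨heq, hsgn⟩ | ⟨heq, hsgn⟩ <;>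
          rw [← abs_mul, heq] <;>
          nlinarith [sq_nonneg (ρ ^ 2 * (a - b) - e), sq_nonneg (ρ ^ 2 * (a - b) + e),
            hρ2, hsgn, mul_pos hρ2 hρ2]
      have h2 : |a - b| * |e| ≤ (ρ ^ 4 * (a - b) ^ 2 + e ^ 2) / ρ ^ 2 := by
        rw [le_div_iff₀ hρ2]; nlinarith
      have h3 : (ρ ^ 4 * (a - b) ^ 2 + e ^ 2) / ρ ^ 2 = ρ ^ 2 * (a - b) ^ 2 + e ^ 2 / ρ ^ 2 := by
        field_simp
      linarith [h3 ▸ h2]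
    have hkm : (0:ℝ) ≤ γ * M / δ := by positivity
    have hab1 : |a - b| * (γ * M / δ * |a - b|) = γ * M / δ * (a - b) ^ 2 := by
      rw [← sq_abs (a - b)]; ring
    calc (a - b) * (f b y - f b (m b)) ≤ |a - b| * |f b y - f b (m b)| := habs
      _ ≤ |a - b| * (β * N * (γ * M / δ * |a - b| + |e|)) := by
          exact mul_le_mul_of_nonneg_left hD (abs_nonneg _)
      _ = β * N * (γ * M / δ * (a - b) ^ 2) + β * N * (|a - b| * |e|) := by
          rw [← sq_abs (a - b)]; ring
      _ ≤ β * N * (γ * M / δ * (a - b) ^ 2) + β * N * (ρ ^ 2 * (a - b) ^ 2 + e ^ 2 / ρ ^ 2) := by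
          have := mul_le_mul_of_nonneg_left hcross hβN
          linarith
      _ = β * N * (γ * M / δ) * (a - b) ^ 2 + β * N * ρ ^ 2 * (a - b) ^ 2
            + β * N / ρ ^ 2 * e ^ 2 := by ring
  have hsplit : f a y - f b (m b) = (f a y - f b y) + (f b y - f b (m b)) := by ring
  calc (a - b) * (f a y - f b (m b))
      = (a - b) * (f a y - f b y) + (a - b) * (f b y - f b (m b)) := by ring
    _ ≤ -α * (a - b) ^ 2 + (β * N * (γ * M / δ) * (a - b) ^ 2 + β * N * ρ ^ 2 * (a - b) ^ 2
          + β * N / ρ ^ 2 * e ^ 2) := add_le_add h1 h2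
    _ = (β * N * (γ * M / δ + ρ ^ 2) - α) * (a - b) ^ 2 + β * N / ρ ^ 2 * e ^ 2 := by ring

/-- For Ω of finite positive measure, α, β, γ, M, N, δ, ρ > 0, f C¹ with
∂f/∂x ≤ -α and 0 ≤ ∂f/∂y ≤ βN everywhere, m C¹ with 0 ≤ m' ≤ γM/δ, and bounded
measurable square-integrable x, X, η :
∫_Ω (x-X)(f(x, m(x)+η) - f(X, m(X))) ≤ (βN(γM/δ + ρ²) - α) ∫_Ω (x-X)² + (βN/ρ²) ∫_Ω η². -/
theorem stmt4 (n : ℕ) (Ω : Set (Fin n → ℝ)) (hΩm : MeasurableSet Ω)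
    (hΩb : Bornology.IsBounded Ω) (hΩpos : 0 < volume Ω) (hΩfin : volume Ω < ⊤)
    (α β γ M N δ ρ : ℝ) (hα : 0 < α) (hβ : 0 < β) (hγ : 0 < γ)
    (hM : 0 < M) (hN : 0 < N) (hδ : 0 < δ) (hρ : 0 < ρ)
    (f : ℝ → ℝ → ℝ) (hf : ContDiff ℝ 1 (fun p : ℝ × ℝ => f p.1 p.2))
    (hfx : ∀ a b : ℝ, deriv (fun s => f s b) a ≤ -α)
    (hfy : ∀ a b : ℝ, 0 ≤ deriv (fun s => f a s) b ∧ deriv (fun s => f a s) b ≤ β * N)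
    (m : ℝ → ℝ) (hmC : ContDiff ℝ 1 m)
    (hm' : ∀ a : ℝ, 0 ≤ deriv m a ∧ deriv m a ≤ γ * M / δ)
    (x X η : (Fin n → ℝ) → ℝ)
    (hxm : Measurable x) (hXm : Measurable X) (hηm : Measurable η)
    (Cx : ℝ) (hxb : ∀ u, |x u| ≤ Cx) (CX : ℝ) (hXb : ∀ u, |X u| ≤ CX)
    (Cη : ℝ) (hηb : ∀ u, |η u| ≤ Cη)
    (hx2 : IntegrableOn (fun u => (x u) ^ 2) Ω)
    (hX2 : IntegrableOn (fun u => (X u) ^ 2) Ω)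
    (hη2 : IntegrableOn (fun u => (η u) ^ 2) Ω) :
    (∫ u in Ω, (x u - X u) * (f (x u) (m (x u) + η u) - f (X u) (m (X u)))) ≤
      (β * N * (γ * M / δ + ρ ^ 2) - α) * (∫ u in Ω, (x u - X u) ^ 2) +
        β * N / ρ ^ 2 * ∫ u in Ω, (η u) ^ 2 := by
  have hfc : Continuous (fun p : ℝ × ℝ => f p.1 p.2) := hf.continuous
  have hmc : Continuous m := hmC.continuous
  set g : (Fin n → ℝ) → ℝ := fun u =>
    (x u - X u) * (f (x u) (m (x u) + η u) - f (X u) (m (X u))) with hg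
  -- measurability
  have hgm : Measurable g := by
    apply (hxm.sub hXm).mul
    apply Measurable.sub
    · exact hfc.measurable.comp (hxm.prodMk ((hmc.measurable.comp hxm).add hηm))
    · exact hfc.measurable.comp (hXm.prodMk (hmc.measurable.comp hXm))
  -- bounds
  set R : ℝ := max Cx CX with hRdef
  have hxR : ∀ u, |x u| ≤ R := fun u => (hxb u).trans (le_max_left _ _)
  have hXR : ∀ u, |X u| ≤ R := fun u => (hXb u).trans (le_max_right _ _)
  have hR0 : (0:ℝ) ≤ R := (abs_nonneg (x (fun _ => 0))).trans (hxR _)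
  have hCη0 : (0:ℝ) ≤ Cη := (abs_nonneg (η (fun _ => 0))).trans (hηb _)
  obtain ⟨Cm, hCm⟩ := (isCompact_Icc (a := -R) (b := R)).exists_bound_of_continuousOn
    hmc.continuousOn
  have hmem : ∀ u, x u ∈ Set.Icc (-R) R := fun u => by
    have := hxR u; rw [abs_le] at this; exact this
  have hmemX : ∀ u, X u ∈ Set.Icc (-R) R := fun u => by
    have := hXR u; rw [abs_le] at this; exact this
  set B : ℝ := Cm + Cη with hBdef
  obtain ⟨Cf, hCf⟩ := ((isCompact_Icc (a := -R) (b := R)).prod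
    (isCompact_Icc (a := -B) (b := B))).exists_bound_of_continuousOn hfc.continuousOn
  have hmB : ∀ t ∈ Set.Icc (-R) R, |m t| ≤ Cm := fun t ht => by
    simpa [Real.norm_eq_abs] using hCm t ht
  have harg1 : ∀ u, (x u, m (x u) + η u) ∈ Set.Icc (-R) R ×ˢ Set.Icc (-B) B := fun u => by
    refine ⟨hmem u, ?_⟩
    have h1 : |m (x u) + η u| ≤ Cm + Cη :=
      (abs_add_le _ _).trans (add_le_add (hmB _ (hmem u)) (hηb u))
    simpa [Set.mem_Icc, hBdef] using abs_le.1 h1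
  have harg2 : ∀ u, (X u, m (X u)) ∈ Set.Icc (-R) R ×ˢ Set.Icc (-B) B := fun u => by
    refine ⟨hmemX u, ?_⟩
    have h1 : |m (X u)| ≤ Cm + Cη := by linarith [hmB _ (hmemX u)]
    simpa [Set.mem_Icc, hBdef] using abs_le.1 h1
  have hgb : ∀ u, ‖g u‖ ≤ 2 * R * (2 * Cf) := by
    intro u
    rw [hg, Real.norm_eq_abs, abs_mul]
    have h1 : |x u - X u| ≤ 2 * R := by
      have := hxR u; have := hXR u
      rw [abs_le] at *; constructor <;> [linarith [(hxR u).trans (le_refl R)]; skip]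
      all_goals cases' abs_le.1 (hxR u) with h1 h2; cases' abs_le.1 (hXR u) with h3 h4; linarith
    have h2 : |f (x u) (m (x u) + η u) - f (X u) (m (X u))| ≤ 2 * Cf := by
      have ha := hCf _ (harg1 u)
      have hb := hCf _ (harg2 u)
      rw [Real.norm_eq_abs] at ha hb
      calc |f (x u) (m (x u) + η u) - f (X u) (m (X u))|
          ≤ |f (x u) (m (x u) + η u)| + |f (X u) (m (X u))| := abs_sub _ _
        _ ≤ 2 * Cf := by linarith
    have hnn : (0:ℝ) ≤ |x u - X u| := abs_nonneg _
    have hnn2 : (0:ℝ) ≤ |f (x u) (m (x u) + η u) - f (X u) (m (X u))| := abs_nonneg _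
    nlinarith
  -- integrability
  have hconst : IntegrableOn (fun _ : Fin n → ℝ => 2 * R * (2 * Cf)) Ω :=
    integrableOn_const hΩfin.ne
  have hgi : IntegrableOn g Ω :=
    Integrable.mono' hconst hgm.aestronglyMeasurable (ae_of_all _ hgb)
  have hsqm : Measurable fun u => (x u - X u) ^ 2 := (hxm.sub hXm).pow_const 2
  have hsqb : ∀ u, ‖(x u - X u) ^ 2‖ ≤ (Cx + CX) ^ 2 := by
    intro u
    rw [Real.norm_eq_abs, abs_of_nonneg (sq_nonneg _)]
    have h1 : |x u - X u| ≤ Cx + CX :=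
      (abs_sub _ _).trans (add_le_add (hxb u) (hXb u))
    nlinarith [abs_nonneg (x u - X u), sq_abs (x u - X u)]
  have hsq : IntegrableOn (fun u => (x u - X u) ^ 2) Ω :=
    Integrable.mono' (integrableOn_const hΩfin.ne) hsqm.aestronglyMeasurable
      (ae_of_all _ hsqb)
  -- conclude
  have hmono := setIntegral_mono_on hgi
    ((hsq.const_mul (β * N * (γ * M / δ + ρ ^ 2) - α)).add
      (hη2.const_mul (β * N / ρ ^ 2))) hΩm
    (fun u _ => stmt4_key α β γ M N δ ρ hα hβ hγ hM hN hδ hρ f hf hfx hfy m hmC hm'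
      (x u) (X u) (η u))
  simp only [Pi.add_apply] at hmono
  rwa [integral_add (hsq.const_mul _) (hη2.const_mul _), integral_const_mul, integral_const_mul] at hmono
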